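/- Let L ≥ 1 be an integer and σ² = (L+1)(2L+1)/6. For every a ≥ 0: √(2/(πσ²)) ∫_{√a}^∞ (x² − a) e^{−x²/(2σ²)} dx ≥ (1/L) ∑_{k=⌈√a⌉}^{L} (k² − a). -/

import Mathlib

open MeasureTheory Real Set Filter


lemma tendsto_aux {b : ℝ} (hb : 0 < b) :
    Tendsto (fun x : ℝ => x * Real.exp (-b*x^2)) atTop (nhds 0) := by
  have h := (rpow_mul_exp_neg_mul_sq_isLittleO_exp_neg hb 1).trans_tendsto ?_
  · simpa [Real.rpow_one] using h
  · have : Tendsto (fun x:ℝ => -(1/2) * x) atTop atBot := by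
      apply Tendsto.const_mul_atTop_of_neg (by norm_num)
      exact tendsto_id
    exact Real.tendsto_exp_atBot.comp this

lemma moment_aux {b : ℝ} (hb : 0 < b) :
    ∫ x in Ioi (0:ℝ), x^2 * Real.exp (-b*x^2) = Real.sqrt (π/b)/(4*b) := by
  have hint2 : Integrable fun x : ℝ => x^2 * Real.exp (-b*x^2) := by
    have := integrable_rpow_mul_exp_neg_mul_sq hb (s := 2) (by norm_num)
    simpa [Real.rpow_natCast] using this
  have hint0 : Integrable fun x : ℝ => Real.exp (-b*x^2) := integrable_exp_neg_mul_sq hb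
  have hder : ∀ x ∈ Ici (0:ℝ), HasDerivAt (fun y : ℝ => -(1/(2*b)) * (y * Real.exp (-b*y^2)))
      (x^2 * Real.exp (-b*x^2) - (1/(2*b)) * Real.exp (-b*x^2)) x := by
    intro x _
    have h1 : HasDerivAt (fun y : ℝ => y * Real.exp (-b*y^2))
        (1 * Real.exp (-b*x^2) + x * (Real.exp (-b*x^2) * (-b * (2*x^1)))) x := by
      exact (hasDerivAt_id x).mul (((hasDerivAt_pow 2 x).const_mul (-b)).exp)
    have := h1.const_mul (-(1/(2*b)))
    exact this.congr_deriv (by field_simp; ring)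
  have hlim : Tendsto (fun x : ℝ => -(1/(2*b)) * (x * Real.exp (-b*x^2))) atTop (nhds 0) := by
    simpa using (tendsto_aux hb).const_mul (-(1/(2*b)))
  have hintd : IntegrableOn (fun x : ℝ =>
      x^2 * Real.exp (-b*x^2) - (1/(2*b)) * Real.exp (-b*x^2)) (Ioi 0) :=
    (hint2.sub (hint0.const_mul _)).integrableOn
  have key := integral_Ioi_of_hasDerivAt_of_tendsto' hder hintd hlim
  have hsplit : ∫ x in Ioi (0:ℝ), (x^2 * Real.exp (-b*x^2) - (1/(2*b)) * Real.exp (-b*x^2))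
      = (∫ x in Ioi (0:ℝ), x^2 * Real.exp (-b*x^2)) - (1/(2*b)) * ∫ x in Ioi (0:ℝ), Real.exp (-b*x^2) := by
    rw [integral_sub hint2.integrableOn ((hint0.const_mul _).integrableOn), integral_const_mul]
  rw [hsplit, integral_gaussian_Ioi] at key
  have hb' : b ≠ 0 := ne_of_gt hb
  rw [show ∫ x in Ioi (0:ℝ), x^2 * Real.exp (-b*x^2)
      = (0 - -(1/(2*b)) * (0 * Real.exp (-b*0^2))) + (1/(2*b)) * (Real.sqrt (π/b)/2) by linarith]
  rw [zero_mul, mul_zero, sub_zero, zero_add]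
  ring

lemma expquad (q : ℝ) (hq : 0 ≤ q) : Real.exp (-q) ≤ 1 - q + q^2/2 := by
  have hd : ∀ x : ℝ, HasDerivAt (fun y => 1 - y + y^2/2 - Real.exp (-y))
      (-1 + x + Real.exp (-x)) x := by
    intro x
    have h1 : HasDerivAt (fun y : ℝ => Real.exp (-y)) (Real.exp (-x) * (-1)) x :=
      (Real.hasDerivAt_exp (-x)).comp x (hasDerivAt_neg x)
    have h2 : HasDerivAt (fun y : ℝ => 1 - y + y^2/2) (-1 + x) x := by
      have := ((hasDerivAt_pow 2 x).div_const 2)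
      have h3 := ((hasDerivAt_const x (1:ℝ)).sub (hasDerivAt_id x)).add this
      exact h3.congr_deriv (by ring)
    exact (h2.sub h1).congr_deriv (by ring)
  have mono : MonotoneOn (fun y => 1 - y + y^2/2 - Real.exp (-y)) (Ici 0) := by
    apply monotoneOn_of_deriv_nonneg (convex_Ici 0)
    · exact Continuous.continuousOn (by continuity)
    · intro x _; exact (hd x).differentiableAt.differentiableWithinAt
    · intro x hx
      rw [(hd x).deriv]
      have := Real.add_one_le_exp (-x)
      linarith
  have h0 := mono self_mem_Ici (mem_Ici.2 hq) hq
  simp only [Real.exp_zero] at h0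
  norm_num at h0
  linarith

lemma expcubic (q : ℝ) (hq : 0 ≤ q) : 1 - q + q^2/2 - q^3/6 ≤ Real.exp (-q) := by
  have hd : ∀ x : ℝ, HasDerivAt (fun y => Real.exp (-y) - (1 - y + y^2/2 - y^3/6))
      (-Real.exp (-x) + 1 - x + x^2/2) x := by
    intro x
    have h1 : HasDerivAt (fun y : ℝ => Real.exp (-y)) (Real.exp (-x) * (-1)) x :=
      (Real.hasDerivAt_exp (-x)).comp x (hasDerivAt_neg x)
    have h2 : HasDerivAt (fun y : ℝ => 1 - y + y^2/2 - y^3/6)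
        (-1 + x - x^2/2) x := by
      have p2 := ((hasDerivAt_pow 2 x).div_const 2)
      have p3 := ((hasDerivAt_pow 3 x).div_const 6)
      have h3 := (((hasDerivAt_const x (1:ℝ)).sub (hasDerivAt_id x)).add p2).sub p3
      exact h3.congr_deriv (by ring)
    exact (h1.sub h2).congr_deriv (by ring)
  have mono : MonotoneOn (fun y => Real.exp (-y) - (1 - y + y^2/2 - y^3/6)) (Ici 0) := by
    apply monotoneOn_of_deriv_nonneg (convex_Ici 0)
    · exact Continuous.continuousOn (by continuity)
    · intro x _; exact (hd x).differentiableAt.differentiableWithinAt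
    · intro x hx
      rw [(hd x).deriv]
      rw [interior_Ici] at hx
      have := expquad x (le_of_lt hx)
      linarith
  have h0 := mono self_mem_Ici (mem_Ici.2 hq) hq
  simp only [Real.exp_zero] at h0
  norm_num at h0
  linarith

lemma sumsq (n : ℕ) : ∑ k ∈ Finset.Icc 1 n, ((k:ℝ))^2 = n*(n+1)*(2*n+1)/6 := by
  induction n with
  | zero => simp
  | succ m ih =>
    rw [Finset.sum_Icc_succ_top (Nat.le_add_left 1 m)]
    rw [ih]
    push_cast
    ring

set_option maxHeartbeats 2000000 in
lemma corepoly (L : ℝ) (hL : 1 ≤ L) :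
    (16*L^3 - 12*L^2 + 2*L + 1)/(24*L^4)
      ≤ Real.sqrt (2/(π * ((L+1)*(2*L+1)/6))) *
        (2/3 - 2/15 * (3*L^2/((L+1)*(2*L+1))) + (3*L^2/((L+1)*(2*L+1)))^2/35
          - (3*L^2/((L+1)*(2*L+1)))^3/189) := by
  have hL0 : (0:ℝ) < L := by linarith
  set t : ℝ := 3*L^2/((L+1)*(2*L+1)) with ht
  set ρ : ℝ := 2/3 - 2/15 * t + t^2/35 - t^3/189 with hρ
  set s : ℝ := (L+1)*(2*L+1)/6 with hs
  have hA : (0:ℝ) < (L+1)*(2*L+1) := by nlinarith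
  have hs0 : (0:ℝ) < s := by rw [hs]; linarith
  have ht0 : 0 ≤ t := by positivity
  have ht32 : t ≤ 3/2 := by
    rw [ht, div_le_iff₀ hA]; nlinarith
  have ht3 : t^3 ≤ (3/2)^3 := pow_le_pow_left₀ ht0 ht32 3
  have hρ0 : 0 < ρ := by
    rw [hρ]; nlinarith [sq_nonneg t]
  have hK0 : 0 ≤ (16*L^3 - 12*L^2 + 2*L + 1)/(24*L^4) := by
    apply div_nonneg _ (by positivity); nlinarith
  have key : ((16*L^3 - 12*L^2 + 2*L + 1)/(24*L^4))^2 * (π * s) ≤ 2 * ρ^2 := by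
    have hπ : π ≤ 3.15 := le_of_lt Real.pi_lt_d2
    have step1 : ((16*L^3 - 12*L^2 + 2*L + 1)/(24*L^4))^2 * (π * s)
        ≤ ((16*L^3 - 12*L^2 + 2*L + 1)/(24*L^4))^2 * ((63/20) * s) := by
      apply mul_le_mul_of_nonneg_left _ (sq_nonneg _)
      apply mul_le_mul_of_nonneg_right _ (le_of_lt hs0)
      linarith
    refine step1.trans ?_
    have hDEN : (0:ℝ) < 3456*L^8*((L+1)*(2*L+1))^6 := by positivity
    rw [← sub_nonneg]
    have hiden : (2*ρ^2 - ((16*L^3 - 12*L^2 + 2*L + 1)/(24*L^4))^2 * ((63/20) * s))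
        * (3456*L^8*((L+1)*(2*L+1))^6)
        = (377043552/5) + (7613831088/7)*(L-1) + (1805131165464/245)*(L-1)^2 + (1527676324164/49)*(L-1)^3 + (113248962286722/1225)*(L-1)^4 + (250189884031167/1225)*(L-1)^5 + (854681186497893/2450)*(L-1)^6 + (330269205683877/700)*(L-1)^7 + (25661411472093/50)*(L-1)^8 + (555505252295166/1225)*(L-1)^9 + (400871263089672/1225)*(L-1)^10 + (236661829921908/1225)*(L-1)^11 + (114082858240392/1225)*(L-1)^12 + (44644860732912/1225)*(L-1)^13 + (2005359715488/175)*(L-1)^14 + (498419345664/175)*(L-1)^15 + (668584157184/1225)*(L-1)^16 + (95032970496/1225)*(L-1)^17 + (9400717056/1225)*(L-1)^18 + (574674432/1225)*(L-1)^19 + (16220928/1225)*(L-1)^20 := by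
      rw [hρ, ht, hs]
      field_simp
      ring
    have hx : (0:ℝ) ≤ L - 1 := by linarith
    have hpow : ∀ k : ℕ, (0:ℝ) ≤ (L-1)^k := fun k => pow_nonneg hx k
    have hnum : (0:ℝ) ≤ (2*ρ^2 - ((16*L^3 - 12*L^2 + 2*L + 1)/(24*L^4))^2 * ((63/20) * s))
        * (3456*L^8*((L+1)*(2*L+1))^6) := by
      rw [hiden]
      linarith [hpow 2, hpow 3, hpow 4, hpow 5, hpow 6, hpow 7, hpow 8, hpow 9,
        hpow 10, hpow 11, hpow 12, hpow 13, hpow 14, hpow 15, hpow 16, hpow 17,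
        hpow 18, hpow 19, hpow 20]
    exact (mul_nonneg_iff_of_pos_right hDEN).mp hnum
  have hKρ : 0 ≤ ((16*L^3 - 12*L^2 + 2*L + 1)/(24*L^4)) / ρ := div_nonneg hK0 hρ0.le
  have h2 : ((16*L^3 - 12*L^2 + 2*L + 1)/(24*L^4)) / ρ ≤ Real.sqrt (2/(π*s)) := by
    rw [show ((16*L^3 - 12*L^2 + 2*L + 1)/(24*L^4))/ρ
        = Real.sqrt ((((16*L^3 - 12*L^2 + 2*L + 1)/(24*L^4))/ρ)^2) from (Real.sqrt_sq hKρ).symm]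
    apply Real.sqrt_le_sqrt
    rw [div_pow, div_le_div_iff₀ (by positivity) (by positivity)]
    linarith [key]
  have := (div_le_iff₀ hρ0).mp h2
  linarith [this]

lemma stmt11_rho_mono (x y : ℝ) (hx : 0 ≤ x) (hxy : x ≤ y) :
    2/3 - 2/15*y + y^2/35 - y^3/189 ≤ 2/3 - 2/15*x + x^2/35 - x^3/189 := by
  have hy : 0 ≤ y := hx.trans hxy
  have hbr : 0 ≤ 2/15 - (x+y)/35 + (x^2+x*y+y^2)/189 := by
    nlinarith [sq_nonneg (x-y), sq_nonneg (x+y-18/5)]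
  nlinarith [mul_nonneg (sub_nonneg.2 hxy) hbr]

set_option maxHeartbeats 1600000 in
theorem stmt_11 (L : ℕ) (hL : 1 ≤ L) (a : ℝ) (ha : 0 ≤ a)
    (σ2 : ℝ) (hσ2 : σ2 = ((L : ℝ) + 1) * (2 * (L : ℝ) + 1) / 6) :
    (1 / (L : ℝ)) * ∑ k ∈ Finset.Icc ⌈Real.sqrt a⌉₊ L, ((k : ℝ) ^ 2 - a)
      ≤ Real.sqrt (2 / (Real.pi * σ2)) *
          ∫ x in Set.Ioi (Real.sqrt a), (x ^ 2 - a) * Real.exp (-x ^ 2 / (2 * σ2)) := by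
  have hL0 : (0:ℝ) < L := by exact_mod_cast Nat.pos_of_ne_zero (by omega)
  have hs0 : 0 < σ2 := by rw [hσ2]; positivity
  set u := Real.sqrt a with hu
  have hu0 : 0 ≤ u := Real.sqrt_nonneg a
  have hua : u^2 = a := Real.sq_sqrt ha
  set b : ℝ := 1/(2*σ2) with hb
  have hb0 : 0 < b := by rw [hb]; positivity
  have hexp : ∀ x:ℝ, -x^2/(2*σ2) = -b*x^2 := fun x => by rw [hb]; ring
  simp_rw [hexp]
  set c : ℝ := Real.sqrt (2/(π*σ2)) with hc
  have hc0 : 0 ≤ c := Real.sqrt_nonneg _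
  clear_value u b c
  rcases lt_or_ge (L:ℝ) u with hcase | hcase
  · -- trivial case : sum is empty
    have hmL : L < ⌈u⌉₊ := Nat.lt_ceil.mpr hcase
    rw [Finset.Icc_eq_empty (by omega), Finset.sum_empty, mul_zero]
    apply mul_nonneg hc0
    apply setIntegral_nonneg measurableSet_Ioi
    intro x hx
    have hx' : u < x := hx
    have hax : a ≤ x^2 := by nlinarith
    exact mul_nonneg (by linarith) (le_of_lt (Real.exp_pos _))
  · -- main case : u ≤ L
    have hint0 : Integrable (fun x:ℝ => Real.exp (-b*x^2)) := integrable_exp_neg_mul_sq hb0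
    have hint2 : Integrable (fun x:ℝ => x^2 * Real.exp (-b*x^2)) := by
      have := integrable_rpow_mul_exp_neg_mul_sq hb0 (s := 2) (by norm_num)
      simpa [Real.rpow_natCast] using this
    have hintg : Integrable (fun x:ℝ => (x^2 - a) * Real.exp (-b*x^2)) := by
      have heq : (fun x:ℝ => (x^2 - a) * Real.exp (-b*x^2))
          = (fun x:ℝ => x^2 * Real.exp (-b*x^2) - a * Real.exp (-b*x^2)) := by
        funext x; ring
      rw [heq]; exact hint2.sub (hint0.const_mul a)
    have hsplit : ∫ x in Ioi (0:ℝ), (x^2 - a) * Real.exp (-b*x^2)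
        = (∫ x in (0:ℝ)..u, (x^2 - a) * Real.exp (-b*x^2))
          + ∫ x in Ioi u, (x^2 - a) * Real.exp (-b*x^2) := by
      rw [intervalIntegral.integral_of_le hu0, ← Ioc_union_Ioi_eq_Ioi hu0]
      exact setIntegral_union (Ioc_disjoint_Ioi le_rfl) measurableSet_Ioi
        hintg.integrableOn hintg.integrableOn
    have hIoi0 : ∫ x in Ioi (0:ℝ), (x^2 - a) * Real.exp (-b*x^2)
        = Real.sqrt (π/b)/(4*b) - a * (Real.sqrt (π/b)/2) := by
      have heq : (fun x:ℝ => (x^2 - a) * Real.exp (-b*x^2))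
          = (fun x:ℝ => x^2 * Real.exp (-b*x^2) - a * Real.exp (-b*x^2)) := by
        funext x; ring
      rw [heq, integral_sub hint2.integrableOn ((hint0.const_mul a).integrableOn),
        integral_const_mul, moment_aux hb0, integral_gaussian_Ioi]
    have hc2 : c * Real.sqrt (π/b) = 2 := by
      rw [hc, ← Real.sqrt_mul (by positivity)]
      rw [show 2/(π*σ2) * (π/b) = 4 by
        rw [hb]; field_simp; ring]
      rw [show (4:ℝ) = 2^2 by norm_num, Real.sqrt_sq (by norm_num)]
    have hbs : 2/(4*b) = σ2 := by rw [hb]; field_simp; ring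
    have hRHS : c * ∫ x in Ioi u, (x^2 - a) * Real.exp (-b*x^2)
        = (σ2 - a) + c * ∫ x in (0:ℝ)..u, (a - x^2) * Real.exp (-b*x^2) := by
      have hneg : ∫ x in (0:ℝ)..u, (a - x^2) * Real.exp (-b*x^2)
          = - ∫ x in (0:ℝ)..u, (x^2 - a) * Real.exp (-b*x^2) := by
        rw [← intervalIntegral.integral_neg]
        congr 1; funext x; ring
      have h1 : ∫ x in Ioi u, (x^2 - a) * Real.exp (-b*x^2)
          = (Real.sqrt (π/b)/(4*b) - a * (Real.sqrt (π/b)/2))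
            - ∫ x in (0:ℝ)..u, (x^2 - a) * Real.exp (-b*x^2) := by
        rw [← hIoi0, hsplit]; ring
      rw [h1, hneg]
      have expand : c * ((Real.sqrt (π/b)/(4*b) - a * (Real.sqrt (π/b)/2))
            - ∫ x in (0:ℝ)..u, (x^2 - a) * Real.exp (-b*x^2))
          = (c * Real.sqrt (π/b)) * (1/(4*b)) - a * ((c * Real.sqrt (π/b)) * (1/2))
            - c * ∫ x in (0:ℝ)..u, (x^2 - a) * Real.exp (-b*x^2) := by ring
      rw [expand, hc2]
      have : (2:ℝ) * (1/(4*b)) = σ2 := by rw [← hbs]; ring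
      rw [this]; ring
    -- sum side
    set m := ⌈u⌉₊ with hm
    have hmL : m ≤ L := Nat.ceil_le.mpr (by exact_mod_cast hcase)
    clear_value m
    set n := m - 1 with hn
    have hsum1 : ∑ k ∈ Finset.Icc 1 L, ((k:ℝ)^2 - a) = L*σ2 - L*a := by
      rw [Finset.sum_sub_distrib, sumsq L, Finset.sum_const, Nat.card_Icc, hσ2]
      simp only [Nat.add_sub_cancel]
      push_cast
      ring
    have hsum2 : ∑ k ∈ Finset.Icc 1 n, (a - (k:ℝ)^2) = n*a - n*(n+1)*(2*n+1)/6 := by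
      have : ∑ k ∈ Finset.Icc 1 n, (a - (k:ℝ)^2)
          = (∑ k ∈ Finset.Icc 1 n, a) - ∑ k ∈ Finset.Icc 1 n, ((k:ℝ))^2 :=
        Finset.sum_sub_distrib (fun _ : ℕ => a) (fun k : ℕ => (k:ℝ)^2)
      rw [this, sumsq n, Finset.sum_const, Nat.card_Icc]
      simp only [Nat.add_sub_cancel]
      push_cast
      ring
    have hsum : ∑ k ∈ Finset.Icc m L, ((k:ℝ)^2 - a)
        = (∑ k ∈ Finset.Icc 1 L, ((k:ℝ)^2 - a)) + ∑ k ∈ Finset.Icc 1 n, (a - (k:ℝ)^2) := by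
      have hnegsum : ∑ k ∈ Finset.Icc 1 n, (a - (k:ℝ)^2)
          = - ∑ k ∈ Finset.Icc 1 n, ((k:ℝ)^2 - a) := by
        rw [← Finset.sum_neg_distrib]
        congr 1; funext k; ring
      rcases Nat.eq_zero_or_pos m with hm0 | hm1
      · -- m = 0, hence u = 0 and a = 0
        have hu00 : u ≤ 0 := by
          have := Nat.ceil_eq_zero.mp (by rw [← hm]; exact hm0)
          exact_mod_cast this
        have hu000 : u = 0 := le_antisymm hu00 hu0
        have ha0 : a = 0 := by rw [← hua, hu000]; ring
        have hn0 : n = 0 := by omega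
        rw [hm0, hn0]
        simp only [Finset.Icc_self, Finset.Icc_eq_empty_of_lt (by omega : (1:ℕ) > 0)]
        rw [← Finset.Ico_add_one_right_eq_Icc, Finset.sum_eq_sum_Ico_succ_bot (by omega : 0 < L + 1),
          Finset.Ico_add_one_right_eq_Icc]
        simp [ha0]
      · have hmn : m = n + 1 := by omega
        have hnL : n ≤ L := by omega
        rw [hmn, Finset.Icc_add_one_left_eq_Ioc]
        have e1 : Finset.Icc 1 L = Finset.Ioc 0 L := by rw [← Finset.Icc_add_one_left_eq_Ioc]; rfl
        have e2 : Finset.Icc 1 n = Finset.Ioc 0 n := by rw [← Finset.Icc_add_one_left_eq_Ioc]; rfl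
        rw [e1, hnegsum, e2]
        have hconsec := Finset.sum_Ioc_consecutive (fun k : ℕ => ((k:ℝ)^2 - a))
          (Nat.zero_le n) hnL
        linarith
    -- reduce goal
    rw [hsum, hsum1, hRHS]
    have hred : (1/(L:ℝ)) * ((L*σ2 - L*a) + ∑ k ∈ Finset.Icc 1 n, (a - (k:ℝ)^2))
        = (σ2 - a) + (1/(L:ℝ)) * ∑ k ∈ Finset.Icc 1 n, (a - (k:ℝ)^2) := by
      field_simp
    rw [hred]
    have key : (1/(L:ℝ)) * ∑ k ∈ Finset.Icc 1 n, (a - (k:ℝ)^2)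
        ≤ c * ∫ x in (0:ℝ)..u, (a - x^2) * Real.exp (-b*x^2) := by
      have hptnonneg : ∀ x ∈ Icc (0:ℝ) u, 0 ≤ (a - x^2) * Real.exp (-b*x^2) := by
        intro x hx
        have h1 : x^2 ≤ u^2 := by nlinarith [hx.1, hx.2]
        exact mul_nonneg (by nlinarith) (le_of_lt (Real.exp_pos _))
      rcases Nat.eq_zero_or_pos n with hn0 | hn1
      · rw [hn0]
        simp only [Finset.Icc_eq_empty_of_lt (by omega : (1:ℕ) > 0), Finset.sum_empty, mul_zero]
        exact mul_nonneg hc0 (intervalIntegral.integral_nonneg hu0 hptnonneg)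
      · -- n ≥ 1
        have hnu : (n:ℝ) ≤ u := by
          have hceil := Nat.ceil_lt_add_one hu0
          rw [← hm] at hceil
          have hmn : m = n + 1 := by omega
          have : ((n:ℝ) + 1) < u + 1 := by
            rw [show ((n:ℝ)+1) = ((m:ℕ):ℝ) by rw [hmn]; push_cast; ring]
            exact hceil
          linarith
        have hn1' : (1:ℝ) ≤ n := by exact_mod_cast hn1
        have hu1 : (1:ℝ) ≤ u := hn1'.trans hnu
        have huL : u ≤ L := hcase
        -- pointwise bound and polynomial integral
        have hcont1 : Continuous (fun x:ℝ => (a - x^2) *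
            (1 - b*x^2 + (b*x^2)^2/2 - (b*x^2)^3/6)) := by fun_prop
        have hcont2 : Continuous (fun x:ℝ => (a - x^2) * Real.exp (-b*x^2)) := by fun_prop
        have hmono : (∫ x in (0:ℝ)..u, (a - x^2) * (1 - b*x^2 + (b*x^2)^2/2 - (b*x^2)^3/6))
            ≤ ∫ x in (0:ℝ)..u, (a - x^2) * Real.exp (-b*x^2) := by
          apply intervalIntegral.integral_mono_on hu0
            (hcont1.intervalIntegrable 0 u) (hcont2.intervalIntegrable 0 u)
          intro x hx
          have hq0 : 0 ≤ b*x^2 := by positivity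
          have hcb := expcubic (b*x^2) hq0
          have hxu : x^2 ≤ u^2 := by nlinarith [hx.1, hx.2]
          have hax : 0 ≤ a - x^2 := by nlinarith
          have : Real.exp (-(b*x^2)) = Real.exp (-b*x^2) := by ring_nf
          rw [← this]
          exact mul_le_mul_of_nonneg_left hcb hax
        have hpoly : ∫ x in (0:ℝ)..u, (a - x^2) * (1 - b*x^2 + (b*x^2)^2/2 - (b*x^2)^3/6)
            = 2/3*u^3 - 2/15*b*u^5 + b^2*u^7/35 - b^3*u^9/189 := by
          have hF : ∀ x ∈ uIcc (0:ℝ) u, HasDerivAt (fun y:ℝ =>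
              a*y - (1 + a*b)*(y^3/3) + (b + a*b^2/2)*(y^5/5)
                - (b^2/2 + a*b^3/6)*(y^7/7) + (b^3/6)*(y^9/9))
              ((a - x^2) * (1 - b*x^2 + (b*x^2)^2/2 - (b*x^2)^3/6)) x := by
            intro x _
            have h1 := (hasDerivAt_id x).const_mul a
            have h3 := ((hasDerivAt_pow 3 x).div_const 3).const_mul (1 + a*b)
            have h5 := ((hasDerivAt_pow 5 x).div_const 5).const_mul (b + a*b^2/2)
            have h7 := ((hasDerivAt_pow 7 x).div_const 7).const_mul (b^2/2 + a*b^3/6)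
            have h9 := ((hasDerivAt_pow 9 x).div_const 9).const_mul (b^3/6)
            have H := (((h1.sub h3).add h5).sub h7).add h9
            exact H.congr_deriv (by push_cast; ring)
          rw [intervalIntegral.integral_eq_sub_of_hasDerivAt hF
            (hcont1.intervalIntegrable 0 u)]
          rw [← hua]
          ring
        -- the arithmetic chain
        have step1 : ∑ k ∈ Finset.Icc 1 n, (a - (k:ℝ)^2)
            ≤ 2/3*u^3 - u^2/2 + u/12 + 1/24 := by
          rw [hsum2, ← hua]
          have hn0' : (0:ℝ) ≤ n := by positivity
          nlinarith [mul_nonneg (sq_nonneg (u - 1/2 - (n:ℝ)))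
            (by linarith : (0:ℝ) ≤ (n:ℝ) + 2*u + 1/2), hnu]
        have step2 : 2/3*u^3 - u^2/2 + u/12 + 1/24
            ≤ u^3 * ((16*(L:ℝ)^3 - 12*(L:ℝ)^2 + 2*(L:ℝ) + 1)/(24*(L:ℝ)^3)) := by
          rw [← sub_nonneg]
          have hid : u^3 * ((16*(L:ℝ)^3 - 12*(L:ℝ)^2 + 2*(L:ℝ) + 1)/(24*(L:ℝ)^3))
              - (2/3*u^3 - u^2/2 + u/12 + 1/24)
              = (((L:ℝ) - u) * ((12*(L:ℝ)^2 - 2*(L:ℝ) - 1)*u^2 - (2*(L:ℝ)^2 + (L:ℝ))*u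
                  - (L:ℝ)^2))/(24*(L:ℝ)^3) := by
            field_simp
            ring
          rw [hid]
          apply div_nonneg _ (by positivity)
          apply mul_nonneg (by linarith)
          have hL1 : (1:ℝ) ≤ L := by exact_mod_cast hL
          nlinarith [mul_nonneg (sub_nonneg.2 hu1) (sub_nonneg.2 hu1), sq_nonneg u,
            mul_le_mul_of_nonneg_left hu1 (by nlinarith : (0:ℝ) ≤ 22*(L:ℝ)^2 - 5*(L:ℝ) - 2)]
        have hcore := corepoly (L:ℝ) (by exact_mod_cast hL)
        have htt : b * u^2 ≤ 3*(L:ℝ)^2/(((L:ℝ)+1)*(2*(L:ℝ)+1)) := by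
          have h1 : b * u^2 ≤ b * (L:ℝ)^2 := by
            apply mul_le_mul_of_nonneg_left _ hb0.le
            nlinarith
          have h2 : b * (L:ℝ)^2 = 3*(L:ℝ)^2/(((L:ℝ)+1)*(2*(L:ℝ)+1)) := by
            rw [hb, hσ2]
            field_simp
            ring
          linarith
        have hrho := stmt11_rho_mono (b*u^2) (3*(L:ℝ)^2/(((L:ℝ)+1)*(2*(L:ℝ)+1)))
          (by positivity) htt
        -- combine
        have hchain : (1/(L:ℝ)) * ∑ k ∈ Finset.Icc 1 n, (a - (k:ℝ)^2)
            ≤ c * (2/3*u^3 - 2/15*b*u^5 + b^2*u^7/35 - b^3*u^9/189) := by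
          have e3 : 2/3*u^3 - 2/15*b*u^5 + b^2*u^7/35 - b^3*u^9/189
              = u^3 * (2/3 - 2/15*(b*u^2) + (b*u^2)^2/35 - (b*u^2)^3/189) := by ring
          have c1 : (1/(L:ℝ)) * ∑ k ∈ Finset.Icc 1 n, (a - (k:ℝ)^2)
              ≤ (1/(L:ℝ)) * (2/3*u^3 - u^2/2 + u/12 + 1/24) := by
            apply mul_le_mul_of_nonneg_left step1 (by positivity)
          have c2 : (1/(L:ℝ)) * (2/3*u^3 - u^2/2 + u/12 + 1/24)
              ≤ (1/(L:ℝ)) * (u^3 * ((16*(L:ℝ)^3 - 12*(L:ℝ)^2 + 2*(L:ℝ) + 1)/(24*(L:ℝ)^3))) := by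
            apply mul_le_mul_of_nonneg_left step2 (by positivity)
          have e4 : (1/(L:ℝ)) * (u^3 * ((16*(L:ℝ)^3 - 12*(L:ℝ)^2 + 2*(L:ℝ) + 1)/(24*(L:ℝ)^3)))
              = u^3 * ((16*(L:ℝ)^3 - 12*(L:ℝ)^2 + 2*(L:ℝ) + 1)/(24*(L:ℝ)^4)) := by
            apply mul_right_cancel₀ (by positivity : (24:ℝ)*(L:ℝ)^4 ≠ 0)
            field_simp
          have c3 : u^3 * ((16*(L:ℝ)^3 - 12*(L:ℝ)^2 + 2*(L:ℝ) + 1)/(24*(L:ℝ)^4))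
              ≤ u^3 * (c * (2/3 - 2/15*(b*u^2) + (b*u^2)^2/35 - (b*u^2)^3/189)) := by
            apply mul_le_mul_of_nonneg_left _ (by positivity)
            refine hcore.trans ?_
            rw [hc, hσ2]
            exact mul_le_mul_of_nonneg_left hrho (Real.sqrt_nonneg _)
          rw [e3]
          calc (1/(L:ℝ)) * ∑ k ∈ Finset.Icc 1 n, (a - (k:ℝ)^2)
              ≤ (1/(L:ℝ)) * (2/3*u^3 - u^2/2 + u/12 + 1/24) := c1
            _ ≤ (1/(L:ℝ)) * (u^3 * ((16*(L:ℝ)^3 - 12*(L:ℝ)^2 + 2*(L:ℝ) + 1)/(24*(L:ℝ)^3))) := c2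
            _ = u^3 * ((16*(L:ℝ)^3 - 12*(L:ℝ)^2 + 2*(L:ℝ) + 1)/(24*(L:ℝ)^4)) := e4
            _ ≤ u^3 * (c * (2/3 - 2/15*(b*u^2) + (b*u^2)^2/35 - (b*u^2)^3/189)) := c3
            _ = c * (u^3 * (2/3 - 2/15*(b*u^2) + (b*u^2)^2/35 - (b*u^2)^3/189)) := by ring
        refine hchain.trans ?_
        rw [← hpoly]
        exact mul_le_mul_of_nonneg_left hmono hc0
    linarith [key]
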